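/- Let A have Spark(A) = L+1 and k ≤ L. Then γ(ℓ_p, A, k), as a function of p on [0,1], is right-continuous at every p ∈ [0,1): lim_{q→p⁺} γ(ℓ_q, A, k) = γ(ℓ_p, A, k). -/

import Mathlib

open Finset MeasureTheory Filter

/-- `phi p x = |x|^p`, with the convention `|x|^0 = 1` for `x ≠ 0` and `phi p 0 = 0`. -/
noncomputable def phi (p x : ℝ) : ℝ := if x = 0 then 0 else |x| ^ p

open Classical in
/-- support of a vector, as a finset -/
noncomputable def supp {n : ℕ} (z : Fin n → ℝ) : Finset (Fin n) :=
  Finset.univ.filter (fun i => z i ≠ 0)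

/-- `Spark(A) = s`: some `s` columns are linearly dependent (a kernel vector with support of
size `s`), and every nonzero kernel vector has support of size at least `s`. -/
def sparkEq {m n : ℕ} (A : Matrix (Fin m) (Fin n) ℝ) (s : ℕ) : Prop :=
  (∃ z, A.mulVec z = 0 ∧ z ≠ 0 ∧ (supp z).card = s) ∧
  (∀ z, A.mulVec z = 0 → z ≠ 0 → s ≤ (supp z).card)

/-- The set of constants `γ` satisfying the null space property inequality at level `k`. -/
def validNSC {m n : ℕ} (A : Matrix (Fin m) (Fin n) ℝ) (p : ℝ) (k : ℕ) : Set ℝ :=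
  {γ | ∀ S : Finset (Fin n), S.card ≤ k → ∀ z, A.mulVec z = 0 →
    ∑ i ∈ S, phi p (z i) ≤ γ * ∑ i ∈ Sᶜ, phi p (z i)}

/-- The null space constant `γ(ℓ_p, A, k)`: the smallest valid constant. -/
noncomputable def gammaNSC {m n : ℕ} (A : Matrix (Fin m) (Fin n) ℝ) (p : ℝ) (k : ℕ) : ℝ :=
  sInf (validNSC A p k)

/-- The ratio `θ(p, z, S)`. -/
noncomputable def theta {n : ℕ} (p : ℝ) (z : Fin n → ℝ) (S : Finset (Fin n)) : ℝ :=
  (∑ i ∈ S, phi p (z i)) / (∑ i ∈ Sᶜ, phi p (z i))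

/-! ### Auxiliary lemmas -/

lemma phi_zero' (p : ℝ) : phi p 0 = 0 := if_pos rfl

lemma phi_nonneg (p x : ℝ) : 0 ≤ phi p x := by
  rw [phi]; split
  · exact le_rfl
  · positivity

lemma phi_pos (p : ℝ) {x : ℝ} (hx : x ≠ 0) : 0 < phi p x := by
  rw [phi, if_neg hx]; exact Real.rpow_pos_of_pos (abs_pos.2 hx) p

lemma phi_eq_rpow {p : ℝ} (hp : p ≠ 0) (x : ℝ) : phi p x = |x| ^ p := by
  rw [phi]; split
  · simp [*, Real.zero_rpow hp]
  · rfl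

lemma phi_of_ne {p x : ℝ} (hx : x ≠ 0) : phi p x = |x| ^ p := by rw [phi, if_neg hx]

lemma phi_zero_of_ne {x : ℝ} (hx : x ≠ 0) : phi 0 x = 1 := by
  rw [phi_of_ne hx, Real.rpow_zero]

lemma phi_smul (p : ℝ) {c : ℝ} (hc : 0 < c) (x : ℝ) :
    phi p (c * x) = c ^ p * phi p x := by
  rcases eq_or_ne x 0 with rfl | h
  · simp [phi_zero']
  · rw [phi_of_ne (mul_ne_zero hc.ne' h), phi_of_ne h, abs_mul, abs_of_pos hc,
      Real.mul_rpow hc.le (abs_nonneg x)]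

lemma phi_le_one {p x : ℝ} (hp : 0 ≤ p) (hx : |x| ≤ 1) : phi p x ≤ 1 := by
  rw [phi]; split
  · norm_num
  · exact Real.rpow_le_one (abs_nonneg x) hx hp

lemma phi_zero_le_one (x : ℝ) : phi 0 x ≤ 1 := by
  rcases eq_or_ne x 0 with rfl | h
  · rw [phi_zero']; norm_num
  · rw [phi_zero_of_ne h]

lemma phi_anti {p q x : ℝ} (hpq : p ≤ q) (hx : |x| ≤ 1) : phi q x ≤ phi p x := by
  rcases eq_or_ne x 0 with rfl | h
  · simp [phi_zero']
  · rw [phi_of_ne h, phi_of_ne h]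
    exact Real.rpow_le_rpow_of_exponent_ge (abs_pos.2 h) hx hpq

lemma continuous_phi {p : ℝ} (hp : 0 < p) : Continuous (phi p) := by
  have h : phi p = fun x => |x| ^ p := by
    funext x
    rw [phi]; split
    · simp [*, Real.zero_rpow hp.ne']
    · rfl
  rw [h]
  exact continuous_abs.rpow_const fun x => Or.inr hp.le

lemma continuous_phi_exp (x : ℝ) : Continuous fun q => phi q x := by
  rcases eq_or_ne x 0 with rfl | h
  · simpa [phi_zero'] using continuous_const
  · have h2 : (fun q => phi q x) = fun q => |x| ^ q := by
      funext q; rw [phi_of_ne h]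
    rw [h2]
    exact continuous_iff_continuousAt.2 fun q =>
      Real.continuousAt_const_rpow (abs_ne_zero.2 h)

lemma tendsto_phi_ne {p : ℝ} {q : ℕ → ℝ} (hq : Tendsto q atTop (nhds p))
    {v : ℕ → ℝ} {x : ℝ} (hx : x ≠ 0) (hqne : ∀ n, q n ≠ 0)
    (hv : Tendsto v atTop (nhds x)) :
    Tendsto (fun n => phi (q n) (v n)) atTop (nhds (|x| ^ p)) := by
  have hrw : ∀ n, phi (q n) (v n) = |v n| ^ (q n) := by
    intro n
    rcases eq_or_ne (v n) 0 with h0 | h0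
    · rw [h0, phi_zero', abs_zero, Real.zero_rpow (hqne n)]
    · exact phi_of_ne h0
  simp only [hrw]
  have hpair : Tendsto (fun n => (|v n|, q n)) atTop (nhds (|x|, p)) :=
    (hv.abs).prodMk_nhds hq
  exact ((Real.continuousAt_rpow (|x|, p) (Or.inl (abs_ne_zero.2 hx))).tendsto).comp hpair

lemma tendsto_phi_pos {p : ℝ} (hp : 0 < p) {q : ℕ → ℝ} (hq : Tendsto q atTop (nhds p))
    (hq1 : ∀ n, p ≤ q n) {v : ℕ → ℝ} {x : ℝ} (hv : Tendsto v atTop (nhds x))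
    (hv1 : ∀ n, |v n| ≤ 1) :
    Tendsto (fun n => phi (q n) (v n)) atTop (nhds (phi p x)) := by
  rcases eq_or_ne x 0 with rfl | hx
  · rw [phi_zero']
    have hb : Tendsto (fun n => phi p (v n)) atTop (nhds 0) := by
      have := ((continuous_phi hp).tendsto 0).comp hv
      simpa [phi_zero', Function.comp_def] using this
    exact squeeze_zero (fun n => phi_nonneg _ _) (fun n => phi_anti (hq1 n) (hv1 n)) hb
  · rw [phi_of_ne hx]
    exact tendsto_phi_ne hq hx (fun n => ne_of_gt (lt_of_lt_of_le hp (hq1 n))) hv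

section Main

variable {M N L : ℕ} {A : Matrix (Fin M) (Fin N) ℝ} {k : ℕ}

lemma mem_supp_iff {z : Fin N → ℝ} {i : Fin N} : i ∈ supp z ↔ z i ≠ 0 := by
  simp [supp]

lemma sdiff_card (hspark : sparkEq A (L + 1)) (hk : k ≤ L) {z : Fin N → ℝ}
    (hz : A.mulVec z = 0) (hz0 : z ≠ 0) {S : Finset (Fin N)} (hS : S.card ≤ k) :
    L + 1 - k ≤ (supp z \ S).card := by
  have h1 := hspark.2 z hz hz0
  have h2 := Finset.le_card_sdiff S (supp z)
  omega

lemma den_pos (hspark : sparkEq A (L + 1)) (hk : k ≤ L) (p : ℝ) {z : Fin N → ℝ}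
    (hz : A.mulVec z = 0) (hz0 : z ≠ 0) {S : Finset (Fin N)} (hS : S.card ≤ k) :
    0 < ∑ i ∈ Sᶜ, phi p (z i) := by
  have hcard := sdiff_card hspark hk hz hz0 hS
  have hne : (supp z \ S).Nonempty := Finset.card_pos.1 (by omega)
  obtain ⟨i, hi⟩ := hne
  rw [Finset.mem_sdiff] at hi
  refine Finset.sum_pos' (fun j _ => phi_nonneg p (z j)) ⟨i, Finset.mem_compl.2 hi.2, ?_⟩
  exact phi_pos p (mem_supp_iff.1 hi.1)

lemma mem_validNSC_iff {p c : ℝ} :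
    c ∈ validNSC A p k ↔ ∀ S : Finset (Fin N), S.card ≤ k → ∀ z, A.mulVec z = 0 → z ≠ 0 →
      ∑ i ∈ S, phi p (z i) ≤ c * ∑ i ∈ Sᶜ, phi p (z i) := by
  constructor
  · exact fun h S hS z hz _ => h S hS z hz
  · intro h S hS z hz
    rcases eq_or_ne z 0 with rfl | hz0
    · simp [phi_zero']
    · exact h S hS z hz hz0

lemma valid_nonneg (hspark : sparkEq A (L + 1)) (hk : k ≤ L) {p c : ℝ}
    (hc : c ∈ validNSC A p k) : 0 ≤ c := by
  obtain ⟨z, hz, hz0, -⟩ := hspark.1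
  have hden := den_pos hspark hk p hz hz0 (S := ∅) (by simp)
  have h := hc ∅ (by simp) z hz
  rw [Finset.sum_empty] at h
  nlinarith

lemma bddBelow_valid (hspark : sparkEq A (L + 1)) (hk : k ≤ L) (p : ℝ) :
    BddBelow (validNSC A p k) :=
  ⟨0, fun _ hc => valid_nonneg hspark hk hc⟩

lemma isClosed_valid (p : ℝ) : IsClosed (validNSC A p k) := by
  have h : validNSC A p k = ⋂ (S : Finset (Fin N)) (_ : S.card ≤ k) (z : Fin N → ℝ)
      (_ : A.mulVec z = 0), {c | ∑ i ∈ S, phi p (z i) ≤ c * ∑ i ∈ Sᶜ, phi p (z i)} := by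
    ext c
    simp only [validNSC, Set.mem_setOf_eq, Set.mem_iInter]
  rw [h]
  exact isClosed_iInter fun S => isClosed_iInter fun _ => isClosed_iInter fun z =>
    isClosed_iInter fun _ => isClosed_le continuous_const (continuous_mul_right _)

lemma continuous_mulVec : Continuous fun z : Fin N → ℝ => A.mulVec z := by
  refine continuous_pi fun i => ?_
  simp only [Matrix.mulVec, dotProduct]
  exact continuous_finset_sum _ fun j _ => continuous_const.mul (continuous_apply j)

lemma isCompact_C : IsCompact ({z : Fin N → ℝ | A.mulVec z = 0} ∩ Metric.sphere 0 1) :=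
  (isCompact_sphere (0 : Fin N → ℝ) 1).inter_left
    (isClosed_eq continuous_mulVec continuous_const)

lemma normalized_mem {z : Fin N → ℝ} (hz : A.mulVec z = 0) (hz0 : z ≠ 0) :
    (‖z‖⁻¹ • z) ∈ ({z : Fin N → ℝ | A.mulVec z = 0} ∩ Metric.sphere 0 1) := by
  constructor
  · show A.mulVec (‖z‖⁻¹ • z) = 0
    rw [Matrix.mulVec_smul, hz, smul_zero]
  · rw [mem_sphere_zero_iff_norm, norm_smul, norm_inv, norm_norm,
      inv_mul_cancel₀ (norm_ne_zero_iff.2 hz0)]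

lemma valid_nonempty_zero (hspark : sparkEq A (L + 1)) (hk : k ≤ L) :
    ((k : ℝ)) ∈ validNSC A 0 k := by
  rw [mem_validNSC_iff]
  intro S hS z hz hz0
  have hnum : ∑ i ∈ S, phi 0 (z i) ≤ (k : ℝ) := by
    calc ∑ i ∈ S, phi 0 (z i) ≤ ∑ _i ∈ S, (1 : ℝ) :=
          Finset.sum_le_sum fun i _ => phi_zero_le_one (z i)
      _ = (S.card : ℝ) := by simp
      _ ≤ (k : ℝ) := Nat.cast_le.2 hS
  have hden : (1 : ℝ) ≤ ∑ i ∈ Sᶜ, phi 0 (z i) := by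
    have hcard := sdiff_card hspark hk hz hz0 hS
    have hne : (supp z \ S).Nonempty := Finset.card_pos.1 (by omega)
    obtain ⟨i, hi⟩ := hne
    rw [Finset.mem_sdiff] at hi
    have h1 : phi 0 (z i) = 1 := phi_zero_of_ne (mem_supp_iff.1 hi.1)
    calc (1 : ℝ) = phi 0 (z i) := h1.symm
      _ ≤ ∑ j ∈ Sᶜ, phi 0 (z j) :=
          Finset.single_le_sum (fun j _ => phi_nonneg 0 (z j)) (Finset.mem_compl.2 hi.2)
  calc ∑ i ∈ S, phi 0 (z i) ≤ (k : ℝ) := hnum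
    _ = (k : ℝ) * 1 := (mul_one _).symm
    _ ≤ (k : ℝ) * ∑ i ∈ Sᶜ, phi 0 (z i) :=
        mul_le_mul_of_nonneg_left hden (Nat.cast_nonneg k)

lemma valid_nonempty_pos (hspark : sparkEq A (L + 1)) (hk : k ≤ L) {p : ℝ} (hp : 0 < p) :
    (validNSC A p k).Nonempty := by
  set C := ({z : Fin N → ℝ | A.mulVec z = 0} ∩ Metric.sphere 0 1) with hCdef
  have hCc : IsCompact C := isCompact_C
  have hCne : C.Nonempty := by
    obtain ⟨z, hz, hz0, -⟩ := hspark.1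
    exact ⟨_, normalized_mem hz hz0⟩
  have key : ∀ S : Finset (Fin N), S.card ≤ k → ∃ c : ℝ, 0 ≤ c ∧ ∀ z ∈ C,
      ∑ i ∈ S, phi p (z i) ≤ c * ∑ i ∈ Sᶜ, phi p (z i) := by
    intro S hS
    have hden0 : ∀ z ∈ C, 0 < ∑ i ∈ Sᶜ, phi p (z i) := by
      intro z hzC
      have hz0 : z ≠ 0 := by
        intro h0
        have := hzC.2
        rw [h0, mem_sphere_zero_iff_norm, norm_zero] at this
        norm_num at this
      exact den_pos hspark hk p hzC.1 hz0 hS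
    have hcont : ContinuousOn
        (fun z : Fin N → ℝ => (∑ i ∈ S, phi p (z i)) / (∑ i ∈ Sᶜ, phi p (z i))) C := by
      apply ContinuousOn.div
      · exact (continuous_finset_sum _ fun i _ =>
          (continuous_phi hp).comp (continuous_apply i)).continuousOn
      · exact (continuous_finset_sum _ fun i _ =>
          (continuous_phi hp).comp (continuous_apply i)).continuousOn
      · exact fun z hz => (hden0 z hz).ne'
    obtain ⟨z₀, hz₀, hmax⟩ := hCc.exists_isMaxOn hCne hcont
    refine ⟨max 0 ((∑ i ∈ S, phi p (z₀ i)) / (∑ i ∈ Sᶜ, phi p (z₀ i))), le_max_left _ _,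
      fun z hzC => ?_⟩
    exact (div_le_iff₀ (hden0 z hzC)).1 ((hmax hzC).trans (le_max_right _ _))
  choose! c hc0 hcle using key
  set F := (Finset.univ : Finset (Finset (Fin N))).filter (fun S => S.card ≤ k) with hF
  refine ⟨∑ S ∈ F, c S, ?_⟩
  rw [mem_validNSC_iff]
  intro S hS z hz hz0
  set t := ‖z‖⁻¹ with htdef
  have ht : 0 < t := inv_pos.2 (norm_pos_iff.2 hz0)
  have hw : t • z ∈ C := normalized_mem hz hz0
  have h1 := hcle S hS (t • z) hw
  have hrw : ∀ T : Finset (Fin N), ∑ i ∈ T, phi p ((t • z) i) = t ^ p * ∑ i ∈ T, phi p (z i) := by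
    intro T
    rw [Finset.mul_sum]
    exact Finset.sum_congr rfl fun i _ => by
      rw [Pi.smul_apply, smul_eq_mul, phi_smul p ht]
  rw [hrw, hrw] at h1
  have htp : 0 < t ^ p := Real.rpow_pos_of_pos ht p
  have h2 : ∑ i ∈ S, phi p (z i) ≤ c S * ∑ i ∈ Sᶜ, phi p (z i) := by
    rw [mul_left_comm] at h1
    exact le_of_mul_le_mul_left h1 htp
  have hcS : c S ≤ ∑ S' ∈ F, c S' := by
    refine Finset.single_le_sum (fun S' hS' => ?_) (Finset.mem_filter.2 ⟨Finset.mem_univ _, hS⟩)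
    exact hc0 S' (Finset.mem_filter.1 hS').2
  exact h2.trans (mul_le_mul_of_nonneg_right hcS
    (Finset.sum_nonneg fun i _ => phi_nonneg p (z i)))

lemma valid_nonempty (hspark : sparkEq A (L + 1)) (hk : k ≤ L) {p : ℝ} (hp : 0 ≤ p) :
    (validNSC A p k).Nonempty := by
  rcases eq_or_lt_of_le hp with h | h
  · exact ⟨(k : ℝ), h ▸ valid_nonempty_zero hspark hk⟩
  · exact valid_nonempty_pos hspark hk h

lemma gamma_mem (hspark : sparkEq A (L + 1)) (hk : k ≤ L) {p : ℝ} (hp : 0 ≤ p) :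
    gammaNSC A p k ∈ validNSC A p k :=
  (isClosed_valid p).csInf_mem (valid_nonempty hspark hk hp) (bddBelow_valid hspark hk p)

lemma gamma_nonneg (hspark : sparkEq A (L + 1)) (hk : k ≤ L) {p : ℝ} (hp : 0 ≤ p) :
    0 ≤ gammaNSC A p k :=
  valid_nonneg hspark hk (gamma_mem hspark hk hp)

lemma gamma_zero_ge (hspark : sparkEq A (L + 1)) (hk : k ≤ L) :
    (k : ℝ) ≤ gammaNSC A 0 k * ((L : ℝ) + 1 - k) := by
  obtain ⟨z, hz, hz0, hcard⟩ := hspark.1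
  obtain ⟨S, hSsub, hScard⟩ := Finset.exists_subset_card_eq (s := supp z) (n := k) (by rw [hcard]; omega)
  have hγ := gamma_mem hspark hk (p := 0) le_rfl
  have h := hγ S (le_of_eq hScard) z hz
  have hnum : ∑ i ∈ S, phi 0 (z i) = (k : ℝ) := by
    rw [Finset.sum_congr rfl fun i hi => phi_zero_of_ne (mem_supp_iff.1 (hSsub hi))]
    simp [hScard]
  have hdenrw : ∑ i ∈ Sᶜ, phi 0 (z i) = ∑ i ∈ supp z \ S, phi 0 (z i) := by
    refine (Finset.sum_subset ?_ ?_).symm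
    · intro i hi
      rw [Finset.mem_sdiff] at hi
      exact Finset.mem_compl.2 hi.2
    · intro i hi hni
      rcases eq_or_ne (z i) 0 with h0 | h0
      · simp [h0, phi_zero']
      · exact absurd (Finset.mem_sdiff.2 ⟨mem_supp_iff.2 h0, Finset.mem_compl.1 hi⟩) hni
  have hden : ∑ i ∈ Sᶜ, phi 0 (z i) = ((L : ℝ) + 1 - k) := by
    rw [hdenrw, Finset.sum_congr rfl fun i hi =>
      phi_zero_of_ne (mem_supp_iff.1 (Finset.mem_sdiff.1 hi).1)]
    rw [Finset.sum_const, Finset.card_sdiff_of_subset hSsub, hcard, hScard, nsmul_eq_mul, mul_one,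
      Nat.cast_sub (by omega : k ≤ L + 1)]
    push_cast
    ring
  rw [hnum, hden] at h
  exact h

lemma exists_lt (hspark : sparkEq A (L + 1)) (hk : k ≤ L) {p : ℝ} (hp : 0 ≤ p) {c : ℝ}
    (hc : c < gammaNSC A p k) :
    ∃ S : Finset (Fin N), S.card ≤ k ∧ ∃ z, A.mulVec z = 0 ∧ z ≠ 0 ∧
      c * ∑ i ∈ Sᶜ, phi p (z i) < ∑ i ∈ S, phi p (z i) := by
  by_contra h
  push_neg at h
  have hmem : c ∈ validNSC A p k :=
    mem_validNSC_iff.2 fun S hS z hz hz0 => h S hS z hz hz0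
  exact absurd (csInf_le (bddBelow_valid hspark hk p) hmem) (not_le.2 hc)

end Main

/-- right-continuity of p ↦ γ(ℓ_p,A,k) at every p ∈ [0,1). -/
theorem stmt7 {M N L : ℕ} (A : Matrix (Fin M) (Fin N) ℝ) (hspark : sparkEq A (L + 1))
    (k : ℕ) (hk : k ≤ L) (p : ℝ) (hp : p ∈ Set.Ico (0 : ℝ) 1) :
    Tendsto (fun q => gammaNSC A q k) (nhdsWithin p (Set.Ioc p 1))
      (nhds (gammaNSC A p k)) := by
  obtain ⟨hp0, hp1⟩ := hp
  rw [tendsto_order]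
  constructor
  · -- lower bound
    intro c hc
    obtain ⟨S, hS, z, hz, hz0, hlt⟩ := exists_lt hspark hk hp0 hc
    have hcont : Continuous fun q : ℝ =>
        (∑ i ∈ S, phi q (z i)) - c * ∑ i ∈ Sᶜ, phi q (z i) := by
      refine Continuous.sub ?_ (Continuous.mul continuous_const ?_)
      · exact continuous_finset_sum _ fun i _ => continuous_phi_exp (z i)
      · exact continuous_finset_sum _ fun i _ => continuous_phi_exp (z i)
    have h0 : 0 < (∑ i ∈ S, phi p (z i)) - c * ∑ i ∈ Sᶜ, phi p (z i) := by linarith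
    have hev : ∀ᶠ q in nhds p,
        0 < (∑ i ∈ S, phi q (z i)) - c * ∑ i ∈ Sᶜ, phi q (z i) :=
      (hcont.continuousAt.tendsto).eventually (eventually_gt_nhds h0)
    filter_upwards [hev.filter_mono nhdsWithin_le_nhds, self_mem_nhdsWithin] with q hq hqm
    have hq0 : 0 ≤ q := hp0.trans hqm.1.le
    have h1 := gamma_mem hspark hk hq0 S hS z hz
    have hden := den_pos hspark hk q hz hz0 hS
    have hlt2 : c * ∑ i ∈ Sᶜ, phi q (z i) < gammaNSC A q k * ∑ i ∈ Sᶜ, phi q (z i) := by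
      linarith
    exact lt_of_mul_lt_mul_right hlt2 hden.le
  · -- upper bound
    intro c hc
    by_contra hcon
    rw [Filter.not_eventually] at hcon
    set γp := gammaNSC A p k with hγp
    set c' := (γp + c) / 2 with hc'def
    have hc'1 : γp < c' := by rw [hc'def]; linarith
    have hc'2 : c' < c := by rw [hc'def]; linarith
    have hc'pos : 0 < c' := lt_of_le_of_lt (gamma_nonneg hspark hk hp0) hc'1
    have hfreq : ∃ᶠ q in nhdsWithin p (Set.Ioc p 1), c' ∉ validNSC A q k := by
      refine hcon.mono fun q hq hmem => ?_
      exact hq (lt_of_le_of_lt (csInf_le (bddBelow_valid hspark hk q) hmem) hc'2)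
    obtain ⟨u, hu_t, hu_p⟩ := Filter.exists_seq_forall_of_frequently hfreq
    have hu_nhds : Tendsto u atTop (nhds p) := hu_t.mono_right nhdsWithin_le_nhds
    have hu_mem : ∀ᶠ n in atTop, u n ∈ Set.Ioc p 1 := hu_t.eventually self_mem_nhdsWithin
    obtain ⟨n₀, hn₀⟩ := eventually_atTop.1 hu_mem
    set q : ℕ → ℝ := fun n => u (n + n₀) with hqdef
    have hq_mem : ∀ n, q n ∈ Set.Ioc p 1 := fun n => hn₀ _ (Nat.le_add_left n₀ n)
    have hq_t : Tendsto q atTop (nhds p) := hu_nhds.comp (tendsto_add_atTop_nat n₀)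
    have hq_not : ∀ n, c' ∉ validNSC A (q n) k := fun n => hu_p (n + n₀)
    have hex : ∀ n, ∃ S : Finset (Fin N), S.card ≤ k ∧ ∃ z, A.mulVec z = 0 ∧
        c' * ∑ i ∈ Sᶜ, phi (q n) (z i) < ∑ i ∈ S, phi (q n) (z i) := by
      intro n
      have h := hq_not n
      simp only [validNSC, Set.mem_setOf_eq, not_forall, not_le] at h
      obtain ⟨S, hS, z, hz, hlt⟩ := h
      exact ⟨S, hS, z, hz, hlt⟩
    choose S hSk z hzker hzlt using hex
    have hz0 : ∀ n, z n ≠ 0 := by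
      intro n h0
      have h := hzlt n
      rw [h0] at h
      simp [phi_zero'] at h
    set w : ℕ → Fin N → ℝ := fun n => (‖z n‖)⁻¹ • z n with hwdef
    have hwmem : ∀ n, w n ∈ ({z : Fin N → ℝ | A.mulVec z = 0} ∩ Metric.sphere 0 1) :=
      fun n => normalized_mem (hzker n) (hz0 n)
    have hwlt : ∀ n, c' * ∑ i ∈ (S n)ᶜ, phi (q n) (w n i) < ∑ i ∈ S n, phi (q n) (w n i) := by
      intro n
      have ht : 0 < (‖z n‖)⁻¹ := inv_pos.2 (norm_pos_iff.2 (hz0 n))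
      have htp : 0 < (‖z n‖)⁻¹ ^ (q n) := Real.rpow_pos_of_pos ht _
      have hrw : ∀ T : Finset (Fin N),
          ∑ i ∈ T, phi (q n) (w n i) = (‖z n‖)⁻¹ ^ (q n) * ∑ i ∈ T, phi (q n) (z n i) := by
        intro T
        rw [Finset.mul_sum]
        exact Finset.sum_congr rfl fun i _ => by
          rw [hwdef]; simp only [Pi.smul_apply, smul_eq_mul]
          rw [phi_smul _ ht]
      rw [hrw, hrw]
      have := hzlt n
      nlinarith
    -- pigeonhole on S
    obtain ⟨S₀, hS₀inf⟩ : ∃ S₀ : Finset (Fin N), {n | S n = S₀}.Infinite := by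
      obtain ⟨S₀, hS₀⟩ := Finite.exists_infinite_fiber S
      refine ⟨S₀, ?_⟩
      have := Set.infinite_coe_iff.1 hS₀
      convert this using 1
      rfl
    set g : ℕ → ℕ := Nat.nth (fun n => S n = S₀) with hgdef
    have hg_mono : StrictMono g := Nat.nth_strictMono hS₀inf
    have hg_S : ∀ n, S (g n) = S₀ := fun n => Nat.nth_mem_of_infinite hS₀inf n
    obtain ⟨wl, hwl, φ, hφ, hwlim⟩ := isCompact_C.tendsto_subseq (fun n => hwmem (g n))
    set ψ : ℕ → ℕ := fun n => g (φ n) with hψdef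
    have hψmono : StrictMono ψ := hg_mono.comp hφ
    have hq_t' : Tendsto (fun n => q (ψ n)) atTop (nhds p) := hq_t.comp hψmono.tendsto_atTop
    have hSψ : ∀ n, S (ψ n) = S₀ := fun n => hg_S (φ n)
    have hS₀k : S₀.card ≤ k := (hSψ 0) ▸ hSk (ψ 0)
    have hwlker : A.mulVec wl = 0 := hwl.1
    have hwl0 : wl ≠ 0 := by
      intro h0
      have := hwl.2
      rw [h0, mem_sphere_zero_iff_norm, norm_zero] at this
      norm_num at this
    have hwi_lim : ∀ i, Tendsto (fun n => w (ψ n) i) atTop (nhds (wl i)) := by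
      intro i
      exact ((continuous_apply i).tendsto _).comp hwlim
    have hwi_le : ∀ n i, |w (ψ n) i| ≤ 1 := by
      intro n i
      have h1 := norm_le_pi_norm (w (ψ n)) i
      have h2 : ‖w (ψ n)‖ = 1 := mem_sphere_zero_iff_norm.1 (hwmem (ψ n)).2
      rw [h2] at h1
      simpa using h1
    have hq_gt : ∀ n, p < q (ψ n) := fun n => (hq_mem (ψ n)).1
    have hq_ne : ∀ n, q (ψ n) ≠ 0 := fun n => ne_of_gt (lt_of_le_of_lt hp0 (hq_gt n))
    have hineq : ∀ n, c' * ∑ i ∈ S₀ᶜ, phi (q (ψ n)) (w (ψ n) i) <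
        ∑ i ∈ S₀, phi (q (ψ n)) (w (ψ n) i) := by
      intro n
      have h := hwlt (ψ n)
      rw [hSψ n] at h
      exact h
    rcases eq_or_lt_of_le hp0 with hp_eq | hp_pos
    · -- p = 0
      have hp_eq' : p = 0 := hp_eq.symm
      subst hp_eq'
      set T := supp wl \ S₀ with hTdef
      have hTcard : L + 1 - k ≤ T.card := sdiff_card hspark hk hwlker hwl0 hS₀k
      have hTpos : 0 < T.card := by omega
      have hlimT : Tendsto (fun n => ∑ i ∈ T, phi (q (ψ n)) (w (ψ n) i)) atTop
          (nhds (T.card : ℝ)) := by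
        have hterm : ∀ i ∈ T, Tendsto (fun n => phi (q (ψ n)) (w (ψ n) i)) atTop (nhds 1) := by
          intro i hi
          have hzi : wl i ≠ 0 := mem_supp_iff.1 (Finset.mem_sdiff.1 hi).1
          have := tendsto_phi_ne hq_t' hzi hq_ne (hwi_lim i)
          rwa [Real.rpow_zero] at this
        have := tendsto_finset_sum T hterm
        simpa using this
      have hkey : ∀ n, c' * ∑ i ∈ T, phi (q (ψ n)) (w (ψ n) i) ≤ (k : ℝ) := by
        intro n
        have hTsub : T ⊆ S₀ᶜ := by
          intro i hi
          exact Finset.mem_compl.2 (Finset.mem_sdiff.1 hi).2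
        have h1 : ∑ i ∈ T, phi (q (ψ n)) (w (ψ n) i) ≤
            ∑ i ∈ S₀ᶜ, phi (q (ψ n)) (w (ψ n) i) :=
          Finset.sum_le_sum_of_subset_of_nonneg hTsub fun i _ _ => phi_nonneg _ _
        have h2 : ∑ i ∈ S₀, phi (q (ψ n)) (w (ψ n) i) ≤ (k : ℝ) := by
          calc ∑ i ∈ S₀, phi (q (ψ n)) (w (ψ n) i) ≤ ∑ _i ∈ S₀, (1 : ℝ) :=
              Finset.sum_le_sum fun i _ => phi_le_one (le_of_lt (lt_of_le_of_lt hp0 (hq_gt n)))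
                (hwi_le n i)
            _ = S₀.card := by simp
            _ ≤ (k : ℝ) := Nat.cast_le.2 hS₀k
        nlinarith [hineq n, hc'pos]
      have hlim2 : c' * (T.card : ℝ) ≤ (k : ℝ) :=
        le_of_tendsto (hlimT.const_mul c') (Filter.Eventually.of_forall hkey)
      have hγ0 := gamma_zero_ge hspark hk
      have hTk : ((L : ℝ) + 1 - k) ≤ (T.card : ℝ) := by
        have h1 : ((L + 1 - k : ℕ) : ℝ) ≤ (T.card : ℝ) := Nat.cast_le.2 hTcard
        rw [Nat.cast_sub (by omega : k ≤ L + 1)] at h1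
        push_cast at h1 ⊢
        linarith
      have hLk : (0 : ℝ) < (L : ℝ) + 1 - k := by
        have : (k : ℝ) ≤ L := Nat.cast_le.2 hk
        linarith
      have hfact1 : c' * ((L : ℝ) + 1 - k) ≤ c' * (T.card : ℝ) :=
        mul_le_mul_of_nonneg_left hTk hc'pos.le
      have hfact2 : gammaNSC A 0 k * ((L : ℝ) + 1 - k) < c' * ((L : ℝ) + 1 - k) :=
        mul_lt_mul_of_pos_right hc'1 hLk
      linarith
    · -- p > 0
      have hlimN : Tendsto (fun n => ∑ i ∈ S₀, phi (q (ψ n)) (w (ψ n) i)) atTop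
          (nhds (∑ i ∈ S₀, phi p (wl i))) :=
        tendsto_finset_sum S₀ fun i _ =>
          tendsto_phi_pos hp_pos hq_t' (fun n => (hq_gt n).le) (hwi_lim i) (fun n => hwi_le n i)
      have hlimD : Tendsto (fun n => ∑ i ∈ S₀ᶜ, phi (q (ψ n)) (w (ψ n) i)) atTop
          (nhds (∑ i ∈ S₀ᶜ, phi p (wl i))) :=
        tendsto_finset_sum S₀ᶜ fun i _ =>
          tendsto_phi_pos hp_pos hq_t' (fun n => (hq_gt n).le) (hwi_lim i) (fun n => hwi_le n i)
      have hle : c' * ∑ i ∈ S₀ᶜ, phi p (wl i) ≤ ∑ i ∈ S₀, phi p (wl i) :=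
        le_of_tendsto_of_tendsto' (hlimD.const_mul c') hlimN fun n => (hineq n).le
      have hγ := gamma_mem hspark hk hp0 S₀ hS₀k wl hwlker
      have hden := den_pos hspark hk p hwlker hwl0 hS₀k
      nlinarith
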